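/- Let n ≥ 4 be an integer and let A = (a_{st}) and B = (b_{st}) be symmetric n×n real matrices with zero diagonals. Then (Ã·B̃) = (1/C(n,2))·(1/2!)·Σ_{(s,t)∈i₂ⁿ} a_{st}·b_{st} + (1/C(n,4))·(1/4!)·Σ_{(s,t,u,v)∈i₄ⁿ} a_{st}·b_{uv} − (2/C(n,3))·(1/3!)·Σ_{(s,t,u)∈i₃ⁿ} a_{st}·b_{su}, where i_mⁿ denotes the set of all m-tuples of pairwise distinct indices drawn from {1,…,n} and C(n,m) is the binomial coefficient. -/

import Mathlib

open Finset Matrix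

/-- The `𝒰`-centered version `Ã` of an `n × n` real matrix `A`:
`ã_{st} = a_{st} − (1/(n−2))·Σ_v a_{sv} − (1/(n−2))·Σ_u a_{ut}
          + (1/((n−1)(n−2)))·Σ_{u,v} a_{uv}` for `s ≠ t`, and `ã_{ss} = 0`. -/
noncomputable def uCenter {n : ℕ} (A : Matrix (Fin n) (Fin n) ℝ) :
    Matrix (Fin n) (Fin n) ℝ := fun s t =>
  if s = t then 0 else
    A s t - (∑ v, A s v) / ((n : ℝ) - 2) - (∑ u, A u t) / ((n : ℝ) - 2)
      + (∑ u, ∑ v, A u v) / (((n : ℝ) - 1) * ((n : ℝ) - 2))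


/-- The inner product of the `𝒰`-centered versions of two `n × n` matrices:
`(Ã·B̃) := (1/(n(n−3)))·Σ_{s≠t} ã_{st}·b̃_{st}`. -/
noncomputable def uInner {n : ℕ} (A B : Matrix (Fin n) (Fin n) ℝ) : ℝ :=
  (∑ s, ∑ t, if s ≠ t then uCenter A s t * uCenter B s t else 0)
    / ((n : ℝ) * ((n : ℝ) - 3))

/- ### Auxiliary lemmas -/

lemma pt3_aux {α : Type*} [DecidableEq α] (s t u : α) (a b : ℝ)
    (ha : s = t → a = 0) (hb : s = u → b = 0) :
    (if s ≠ t ∧ s ≠ u ∧ t ≠ u then a * b else 0)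
      = a * b - (if t = u then a * b else 0) := by
  by_cases h1 : s = t
  · simp [ha h1]
  by_cases h2 : s = u
  · simp [hb h2]
  by_cases h3 : t = u <;> simp [h1, h2, h3]

lemma pt4_aux {α : Type*} [DecidableEq α] (s t u v : α) (a b : ℝ)
    (ha : s = t → a = 0) (hb : u = v → b = 0) :
    (if s ≠ t ∧ s ≠ u ∧ s ≠ v ∧ t ≠ u ∧ t ≠ v ∧ u ≠ v then a * b else 0)
    = a * b - (if s = u then a * b else 0) - (if s = v then a * b else 0)
      - (if t = u then a * b else 0) - (if t = v then a * b else 0)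
      + (if s = u ∧ t = v then a * b else 0) + (if s = v ∧ t = u then a * b else 0) := by
  by_cases h1 : s = t
  · simp [ha h1]
  by_cases h2 : u = v
  · simp [hb h2]
  by_cases h3 : s = u <;> by_cases h4 : s = v <;> by_cases h5 : t = u <;> by_cases h6 : t = v <;>
    simp_all

lemma sum_ite_const_aux {α : Type*} [Fintype α] (c : Prop) [Decidable c] (f : α → ℝ) :
    ∑ v : α, (if c then f v else 0) = if c then ∑ v, f v else 0 := by split <;> simp

lemma sum_comm_mul_aux {n : ℕ} (a : Fin n → Fin n → ℝ) (q : Fin n → ℝ) :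
    ∑ s : Fin n, ∑ t, a s t * q t = ∑ t, (∑ s, a s t) * q t := by
  rw [Finset.sum_comm]; exact Finset.sum_congr rfl fun t _ => (Finset.sum_mul ..).symm

lemma expand_aux {n : ℕ} (a b : Fin n → Fin n → ℝ) (p q : Fin n → ℝ) (c d : ℝ) :
    ∑ s : Fin n, ∑ t : Fin n, (a s t + p s + p t + c) * (b s t + q s + q t + d)
    = (∑ s, ∑ t, a s t * b s t)
      + (∑ s, (∑ t, a s t) * q s) + (∑ s, ∑ t, a s t * q t)
      + d * (∑ s, ∑ t, a s t)
      + (∑ s, p s * (∑ t, b s t)) + (∑ s, ∑ t, p t * b s t)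
      + c * (∑ s, ∑ t, b s t)
      + 2 * n * (∑ s, p s * q s) + 2 * (∑ s, p s) * (∑ s, q s)
      + 2 * n * d * (∑ s, p s) + 2 * n * c * (∑ s, q s)
      + n * n * (c * d) := by
  simp only [add_mul, mul_add, Finset.sum_add_distrib, ← Finset.mul_sum, ← Finset.sum_mul,
    Finset.sum_const, Finset.card_univ, Fintype.card_fin, nsmul_eq_mul]
  rw [show (∑ x : Fin n, p x * ((n:ℝ) * q x)) = (n:ℝ) * ∑ x : Fin n, p x * q x by
    rw [Finset.mul_sum]; exact Finset.sum_congr rfl fun _ _ => by ring]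
  ring

set_option maxHeartbeats 2000000 in
/-- For `n ≥ 4` and symmetric `n × n` matrices `A`, `B` with zero
diagonals, the inner product `(Ã·B̃)` equals the `𝒰`-statistic combination
`(1/C(n,2))·(1/2!)·Σ_{(s,t)∈i₂ⁿ} a_{st} b_{st} + (1/C(n,4))·(1/4!)·Σ_{(s,t,u,v)∈i₄ⁿ} a_{st} b_{uv}
 − (2/C(n,3))·(1/3!)·Σ_{(s,t,u)∈i₃ⁿ} a_{st} b_{su}`, where `i_mⁿ` is the set of `m`-tuples
of pairwise distinct indices. -/
theorem uInner_eq_uStatistic (n : ℕ) (hn : 4 ≤ n)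
    (A B : Matrix (Fin n) (Fin n) ℝ) (hsymmA : Aᵀ = A) (hsymmB : Bᵀ = B)
    (hdiagA : ∀ s, A s s = 0) (hdiagB : ∀ s, B s s = 0) :
    uInner A B =
      (1 / (n.choose 2 : ℝ)) * (1 / (Nat.factorial 2 : ℝ)) *
        (∑ s, ∑ t, if s ≠ t then A s t * B s t else 0)
      + (1 / (n.choose 4 : ℝ)) * (1 / (Nat.factorial 4 : ℝ)) *
        (∑ s, ∑ t, ∑ u, ∑ v,
          if s ≠ t ∧ s ≠ u ∧ s ≠ v ∧ t ≠ u ∧ t ≠ v ∧ u ≠ v then A s t * B u v else 0)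
      - (2 / (n.choose 3 : ℝ)) * (1 / (Nat.factorial 3 : ℝ)) *
        (∑ s, ∑ t, ∑ u, if s ≠ t ∧ s ≠ u ∧ t ≠ u then A s t * B s u else 0) := by
  have hA' : ∀ i j, A j i = A i j := fun i j => by
    conv_lhs => rw [← hsymmA]
    exact Matrix.transpose_apply A j i
  have hB' : ∀ i j, B j i = B i j := fun i j => by
    conv_lhs => rw [← hsymmB]
    exact Matrix.transpose_apply B j i
  have colA : ∀ t, (∑ u, A u t) = ∑ u, A t u := fun t =>
    Finset.sum_congr rfl fun u _ => hA' t u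
  have colB : ∀ t, (∑ u, B u t) = ∑ u, B t u := fun t =>
    Finset.sum_congr rfl fun u _ => hB' t u
  have hx : (4:ℝ) ≤ (n:ℝ) := by exact_mod_cast hn
  have h0 : (n:ℝ) ≠ 0 := by intro h; nlinarith
  have h1 : (n:ℝ) - 1 ≠ 0 := by intro h; nlinarith
  have h2 : (n:ℝ) - 2 ≠ 0 := by intro h; nlinarith
  have h3 : (n:ℝ) - 3 ≠ 0 := by intro h; nlinarith
  -- cast values of the binomial coefficients
  have e2 : ((n.choose 2 : ℕ) : ℝ) = (n:ℝ) * ((n:ℝ) - 1) / 2 := by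
    have h := Nat.descFactorial_eq_factorial_mul_choose n 2
    have hcast : ((n.descFactorial 2 : ℕ) : ℝ) = (n:ℝ) * ((n:ℝ) - 1) := by
      simp only [Nat.descFactorial, Nat.sub_zero]
      push_cast [Nat.cast_sub (by omega : 1 ≤ n)]
      ring
    rw [h] at hcast
    push_cast at hcast
    norm_num [Nat.factorial] at hcast
    linarith
  have e3 : ((n.choose 3 : ℕ) : ℝ) = (n:ℝ) * ((n:ℝ) - 1) * ((n:ℝ) - 2) / 6 := by
    have h := Nat.descFactorial_eq_factorial_mul_choose n 3
    have hcast : ((n.descFactorial 3 : ℕ) : ℝ)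
        = (n:ℝ) * ((n:ℝ) - 1) * ((n:ℝ) - 2) := by
      simp only [Nat.descFactorial, Nat.sub_zero]
      push_cast [Nat.cast_sub (by omega : 1 ≤ n), Nat.cast_sub (by omega : 2 ≤ n)]
      ring
    rw [h] at hcast
    push_cast at hcast
    norm_num [Nat.factorial] at hcast
    linarith
  have e4 : ((n.choose 4 : ℕ) : ℝ) = (n:ℝ) * ((n:ℝ) - 1) * ((n:ℝ) - 2) * ((n:ℝ) - 3) / 24 := by
    have h := Nat.descFactorial_eq_factorial_mul_choose n 4
    have hcast : ((n.descFactorial 4 : ℕ) : ℝ)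
        = (n:ℝ) * ((n:ℝ) - 1) * ((n:ℝ) - 2) * ((n:ℝ) - 3) := by
      simp only [Nat.descFactorial, Nat.sub_zero]
      push_cast [Nat.cast_sub (by omega : 1 ≤ n), Nat.cast_sub (by omega : 2 ≤ n),
        Nat.cast_sub (by omega : 3 ≤ n)]
      ring
    rw [h] at hcast
    push_cast at hcast
    norm_num [Nat.factorial] at hcast
    linarith
  -- the pair sum
  have hR1 : (∑ s, ∑ t, if s ≠ t then A s t * B s t else 0)
      = ∑ s, ∑ t, A s t * B s t := by
    refine Finset.sum_congr rfl fun s _ => Finset.sum_congr rfl fun t _ => ?_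
    by_cases h : s = t
    · simp [h, hdiagA t]
    · simp [h]
  -- the triple sum
  have hR3 : (∑ s, ∑ t, ∑ u, if s ≠ t ∧ s ≠ u ∧ t ≠ u then A s t * B s u else 0)
      = (∑ s, (∑ t, A s t) * (∑ t, B s t)) - ∑ s, ∑ t, A s t * B s t := by
    have h1' : ∀ s t : Fin n, (∑ u, if s ≠ t ∧ s ≠ u ∧ t ≠ u then A s t * B s u else 0)
        = A s t * (∑ u, B s u) - A s t * B s t := by
      intro s t
      have hp : ∀ u, (if s ≠ t ∧ s ≠ u ∧ t ≠ u then A s t * B s u else 0)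
          = A s t * B s u - (if t = u then A s t * B s u else 0) := fun u =>
        pt3_aux s t u (A s t) (B s u) (fun h => h ▸ hdiagA s) (fun h => h ▸ hdiagB s)
      rw [Finset.sum_congr rfl fun u _ => hp u, Finset.sum_sub_distrib, ← Finset.mul_sum]
      simp [Finset.sum_ite_eq]
    rw [Finset.sum_congr rfl fun s _ => Finset.sum_congr rfl fun t _ => h1' s t]
    simp only [Finset.sum_sub_distrib, ← Finset.sum_mul]
  -- the quadruple sum
  have hR4 : (∑ s, ∑ t, ∑ u, ∑ v,
        if s ≠ t ∧ s ≠ u ∧ s ≠ v ∧ t ≠ u ∧ t ≠ v ∧ u ≠ v then A s t * B u v else 0)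
      = (∑ s, ∑ t, A s t) * (∑ s, ∑ t, B s t)
        - 4 * (∑ s, (∑ t, A s t) * (∑ t, B s t)) + 2 * (∑ s, ∑ t, A s t * B s t) := by
    have hpw : ∀ s t u v : Fin n,
        (if s ≠ t ∧ s ≠ u ∧ s ≠ v ∧ t ≠ u ∧ t ≠ v ∧ u ≠ v then A s t * B u v else 0)
        = A s t * B u v - (if s = u then A s t * B u v else 0)
          - (if s = v then A s t * B u v else 0) - (if t = u then A s t * B u v else 0)
          - (if t = v then A s t * B u v else 0) + (if s = u ∧ t = v then A s t * B u v else 0)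
          + (if s = v ∧ t = u then A s t * B u v else 0) := fun s t u v =>
      pt4_aux s t u v _ _ (fun h => h ▸ hdiagA s) (fun h => h ▸ hdiagB u)
    rw [Finset.sum_congr rfl fun s _ => Finset.sum_congr rfl fun t _ =>
      Finset.sum_congr rfl fun u _ => Finset.sum_congr rfl fun v _ => hpw s t u v]
    simp only [Finset.sum_add_distrib, Finset.sum_sub_distrib]
    have hF : (∑ s, ∑ t, ∑ u, ∑ v : Fin n, A s t * B u v)
        = (∑ s, ∑ t, A s t) * (∑ s, ∑ t, B s t) := by
      simp only [← Finset.mul_sum, ← Finset.sum_mul]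
    have hI1 : (∑ s, ∑ t, ∑ u, ∑ v : Fin n, if s = u then A s t * B u v else 0)
        = ∑ s, (∑ t, A s t) * (∑ t, B s t) := by
      simp only [sum_ite_const_aux, Finset.sum_ite_eq, Finset.mem_univ, if_true,
        ← Finset.mul_sum, ← Finset.sum_mul]
    have hI2 : (∑ s, ∑ t, ∑ u, ∑ v : Fin n, if s = v then A s t * B u v else 0)
        = ∑ s, (∑ t, A s t) * (∑ t, B s t) := by
      simp only [Finset.sum_ite_eq, Finset.mem_univ, if_true, ← Finset.mul_sum, colB,
        ← Finset.sum_mul]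
    have hI3 : (∑ s, ∑ t, ∑ u, ∑ v : Fin n, if t = u then A s t * B u v else 0)
        = ∑ s, (∑ t, A s t) * (∑ t, B s t) := by
      simp only [sum_ite_const_aux, Finset.sum_ite_eq, Finset.mem_univ, if_true,
        ← Finset.mul_sum]
      rw [sum_comm_mul_aux (a := A)]
      exact Finset.sum_congr rfl fun t _ => by rw [colA]
    have hI4 : (∑ s, ∑ t, ∑ u, ∑ v : Fin n, if t = v then A s t * B u v else 0)
        = ∑ s, (∑ t, A s t) * (∑ t, B s t) := by
      simp only [Finset.sum_ite_eq, Finset.mem_univ, if_true, ← Finset.mul_sum, colB]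
      rw [sum_comm_mul_aux (a := A)]
      exact Finset.sum_congr rfl fun t _ => by rw [colA]
    have hI5 : (∑ s, ∑ t, ∑ u, ∑ v : Fin n, if s = u ∧ t = v then A s t * B u v else 0)
        = ∑ s, ∑ t, A s t * B s t := by
      simp only [ite_and, sum_ite_const_aux, Finset.sum_ite_eq, Finset.mem_univ, if_true]
    have hI6 : (∑ s, ∑ t, ∑ u, ∑ v : Fin n, if s = v ∧ t = u then A s t * B u v else 0)
        = ∑ s, ∑ t, A s t * B s t := by
      simp only [ite_and, sum_ite_const_aux, Finset.sum_ite_eq, Finset.mem_univ, if_true]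
      exact Finset.sum_congr rfl fun s _ => Finset.sum_congr rfl fun t _ => by rw [hB' s t]
    rw [hF, hI1, hI2, hI3, hI4, hI5, hI6]
    ring
  -- the left-hand side
  have hLHS : (∑ s, ∑ t, if s ≠ t then uCenter A s t * uCenter B s t else 0)
      = (∑ s, ∑ t, A s t * B s t)
        - 2 / ((n:ℝ) - 2) * (∑ s, (∑ t, A s t) * (∑ t, B s t))
        + ((∑ s, ∑ t, A s t) * (∑ s, ∑ t, B s t)) / (((n:ℝ) - 1) * ((n:ℝ) - 2)) := by
    set x : ℝ := (n : ℝ) with hxdef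
    set pA : Fin n → ℝ := fun s => -((∑ t, A s t) / (x - 2)) with hpA
    set pB : Fin n → ℝ := fun s => -((∑ t, B s t) / (x - 2)) with hpB
    set cA : ℝ := (∑ s, ∑ t, A s t) / ((x - 1) * (x - 2)) with hcA
    set cB : ℝ := (∑ s, ∑ t, B s t) / ((x - 1) * (x - 2)) with hcB
    have step : (∑ s, ∑ t, if s ≠ t then uCenter A s t * uCenter B s t else 0)
        = (∑ s, ∑ t, (A s t + pA s + pA t + cA) * (B s t + pB s + pB t + cB))
          - ∑ s, (A s s + pA s + pA s + cA) * (B s s + pB s + pB s + cB) := by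
      have key : ∀ s t : Fin n, (if s ≠ t then uCenter A s t * uCenter B s t else 0)
          = (A s t + pA s + pA t + cA) * (B s t + pB s + pB t + cB)
            - (if s = t then (A s t + pA s + pA t + cA) * (B s t + pB s + pB t + cB)
                else 0) := by
        intro s t
        by_cases h : s = t
        · simp [h]
        · have eA : uCenter A s t = A s t + pA s + pA t + cA := by
            simp only [uCenter, if_neg h, hpA, hcA, colA t]
            ring
          have eB : uCenter B s t = B s t + pB s + pB t + cB := by
            simp only [uCenter, if_neg h, hpB, hcB, colB t]
            ring
          simp [h, eA, eB]
      rw [Finset.sum_congr rfl fun s _ => Finset.sum_congr rfl fun t _ => key s t]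
      simp only [Finset.sum_sub_distrib, Finset.sum_ite_eq, Finset.mem_univ, if_true]
    rw [step, expand_aux (a := A) (b := B)]
    have epA : (∑ s, pA s) = (∑ s, ∑ t, A s t) * (-(x - 2)⁻¹) := by
      rw [Finset.sum_mul]
      exact Finset.sum_congr rfl fun s _ => by rw [hpA]; ring
    have epB : (∑ s, pB s) = (∑ s, ∑ t, B s t) * (-(x - 2)⁻¹) := by
      rw [Finset.sum_mul]
      exact Finset.sum_congr rfl fun s _ => by rw [hpB]; ring
    have epp : (∑ s, pA s * pB s)
        = (∑ s, (∑ t, A s t) * (∑ t, B s t)) * ((x - 2)⁻¹ * (x - 2)⁻¹) := by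
      rw [Finset.sum_mul]
      exact Finset.sum_congr rfl fun s _ => by rw [hpA, hpB]; ring
    have eT2 : (∑ s, (∑ t, A s t) * pB s)
        = (∑ s, (∑ t, A s t) * (∑ t, B s t)) * (-(x - 2)⁻¹) := by
      rw [Finset.sum_mul]
      exact Finset.sum_congr rfl fun s _ => by rw [hpB]; ring
    have eT3 : (∑ s, ∑ t, A s t * pB t)
        = (∑ s, (∑ t, A s t) * (∑ t, B s t)) * (-(x - 2)⁻¹) := by
      rw [sum_comm_mul_aux (a := A), Finset.sum_mul]
      exact Finset.sum_congr rfl fun t _ => by rw [hpB, colA t]; ring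
    have eT5 : (∑ s, pA s * (∑ t, B s t))
        = (∑ s, (∑ t, A s t) * (∑ t, B s t)) * (-(x - 2)⁻¹) := by
      rw [Finset.sum_mul]
      exact Finset.sum_congr rfl fun s _ => by rw [hpA]; ring
    have eT6 : (∑ s, ∑ t, pA t * B s t)
        = (∑ s, (∑ t, A s t) * (∑ t, B s t)) * (-(x - 2)⁻¹) := by
      have hc : ∀ s t : Fin n, pA t * B s t = B s t * pA t := fun s t => mul_comm _ _
      rw [Finset.sum_congr rfl fun s _ => Finset.sum_congr rfl fun t _ => hc s t,
        sum_comm_mul_aux (a := B), Finset.sum_mul]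
      exact Finset.sum_congr rfl fun t _ => by rw [hpA, colB t]; ring
    have eD : (∑ s, (A s s + pA s + pA s + cA) * (B s s + pB s + pB s + cB))
        = 4 * (∑ s, pA s * pB s) + 2 * cB * (∑ s, pA s) + 2 * cA * (∑ s, pB s)
          + n * (cA * cB) := by
      have hd : ∀ s : Fin n, (A s s + pA s + pA s + cA) * (B s s + pB s + pB s + cB)
          = 4 * (pA s * pB s) + 2 * cB * pA s + 2 * cA * pB s + cA * cB := by
        intro s; rw [hdiagA s, hdiagB s]; ring
      rw [Finset.sum_congr rfl fun s _ => hd s]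
      simp only [Finset.sum_add_distrib, ← Finset.mul_sum, Finset.sum_const, Finset.card_univ,
        Fintype.card_fin, nsmul_eq_mul]
      ring
    rw [eD, epA, epB, epp, eT2, eT3, eT5, eT6, hcA, hcB]
    generalize (∑ s, ∑ t, A s t * B s t) = S1
    generalize (∑ s, (∑ t, A s t) * (∑ t, B s t)) = S2
    generalize (∑ s, ∑ t, A s t) = TA
    generalize (∑ s, ∑ t, B s t) = TB
    field_simp
    ring
  -- assemble
  rw [uInner, hLHS, hR1, hR3, hR4, e2, e3, e4]
  norm_num [Nat.factorial]
  generalize (∑ s, ∑ t, A s t * B s t) = S1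
  generalize (∑ s, (∑ t, A s t) * (∑ t, B s t)) = S2
  generalize (∑ s, ∑ t, A s t) = TA
  generalize (∑ s, ∑ t, B s t) = TB
  field_simp
  ring
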